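/- Let α_{m,k} and β_{m,k} be the γ-coefficients of a_m and b_m, i.e. a_m(x) = ∑_{k=0}^{⌊m/2⌋} α_{m,k} x^k (1+x)^{m−2k} and b_m(x) = ∑_{k=0}^{⌊(m−1)/2⌋} β_{m,k} x^k (1+x)^{m−1−2k}. Then for all m ≥ 1 and all admissible k: α_{m+1,k} = 2(2m+1−k) α_{m,k} − (4k−1) β_{m,k−1} (with β_{m,−1} = 0 and α_{m,k} = 0 for k > ⌊m/2⌋), and β_{m+1,k} = (1+4k) α_{m,k} + (4m+2k+3) β_{m,k} (with β_{m,k} = 0 for k > ⌊(m−1)/2⌋). -/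

import Mathlib

open Polynomial Finset

private lemma onePlusX_deg : (1 + X : ℝ[X]).natDegree ≤ 1 :=
  le_trans (natDegree_add_le _ _) (by simp)

private lemma onePlusX_pow_deg (j : ℕ) : ((1 + X : ℝ[X])^j).natDegree ≤ j :=
  le_trans natDegree_pow_le (by nlinarith [onePlusX_deg])

private lemma reflect_v_pow (j : ℕ) : reflect j ((1+X:ℝ[X])^j) = (1+X)^j := by
  induction j with
  | zero => simp
  | succ j ih =>
    rw [pow_succ, reflect_mul _ _ (onePlusX_pow_deg j) onePlusX_deg, ih]
    congr 1
    have h1 : (1 + X : ℝ[X]) = X^0 + X^1 := by ring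
    rw [h1, reflect_add, reflect_monomial, reflect_monomial]
    simp [revAt_le] <;> ring

private lemma basis_deg (c : ℝ) (k j : ℕ) : (C c * X^k * (1+X)^j).natDegree ≤ k + j := by
  refine le_trans (natDegree_mul_le) ?_
  have := onePlusX_pow_deg j
  have h2 : (C c * X^k : ℝ[X]).natDegree ≤ k :=
    le_trans natDegree_mul_le (by simp)
  omega

private lemma reflect_basis (c : ℝ) (n k : ℕ) (h : 2*k ≤ n) :
    reflect n (C c * X^k * (1+X)^(n-2*k)) = C c * X^k * (1+X)^(n-2*k) := by
  obtain ⟨j, rfl⟩ : ∃ j, n = 2*k + j := ⟨n - 2*k, by omega⟩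
  have hj : 2*k + j - 2*k = j := by omega
  rw [hj, mul_assoc, reflect_C_mul,
    reflect_mul _ _ (by simp [natDegree_X_pow]; omega : (X^k:ℝ[X]).natDegree ≤ 2*k) (onePlusX_pow_deg _),
    reflect_monomial, reflect_v_pow, revAt_le (by omega : k ≤ 2*k)]
  congr 3
  omega

private lemma reflect_sum (N : ℕ) (s : Finset ℕ) (f : ℕ → ℝ[X]) :
    reflect N (∑ k ∈ s, f k) = ∑ k ∈ s, reflect N (f k) := by
  classical
  induction s using Finset.induction with
  | empty => simp
  | insert _ _ h ih => simp [Finset.sum_insert h, reflect_add, ih]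

private lemma indep : ∀ (N : ℕ) (n : ℕ) (c : ℕ → ℝ), (∀ k, k < N → 2*k ≤ n) →
    (∑ k ∈ range N, C (c k) * X^k * (1+X)^(n-2*k)) = 0 → ∀ k, k < N → c k = 0 := by
  intro N
  induction N with
  | zero => intro n c _ _ k hk; omega
  | succ N ih =>
    intro n c hdeg hsum k hk
    rw [sum_range_succ'] at hsum
    have h0 : c 0 = 0 := by
      have := congrArg (eval 0) hsum
      simpa [eval_finset_sum] using this
    rw [h0] at hsum
    simp only [map_zero, zero_mul, add_zero] at hsum
    have hfac : ∀ j, j < N → C (c (j+1)) * X^(j+1) * (1+X)^(n-2*(j+1))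
        = X * (C (c (j+1)) * X^j * (1+X)^((n-2)-2*j)) := by
      intro j hj
      have : n - 2*(j+1) = (n-2) - 2*j := by omega
      rw [this, pow_succ]; ring
    rw [Finset.sum_congr rfl (fun j hj => hfac j (mem_range.mp hj)), ← mul_sum] at hsum
    have hT : (∑ j ∈ range N, C (c (j+1)) * X^j * (1+X)^((n-2)-2*j)) = 0 := by
      rcases mul_eq_zero.mp hsum with h | h
      · exact absurd h X_ne_zero
      · exact h
    have := ih (n-2) (fun j => c (j+1)) (fun j hj => by have := hdeg (j+1) (by omega); omega) hT
    rcases k with _ | k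
    · exact h0
    · exact this k (by omega)

private lemma opA' (k j : ℕ) (c : ℝ) :
    (2*((2*k+j : ℕ) : ℝ[X])+1)*(2+3*X)*(C c * X^k*(1+X)^j)
      - 2*X*(1+X)*derivative (C c * X^k * (1+X)^j)
    = C (2*(3*(k:ℝ)+2*(j:ℝ)+1)*c) * X^k*(1+X)^(j+1)
      + C ((4*(k:ℝ)+1)*c) * X^(k+1) * (1+X)^j := by
  have hd : derivative (C c * X^k * (1+X)^j)
      = C c * (C (k:ℝ) * X^(k-1)) * (1+X)^j + C c * X^k * (C (j:ℝ) * (1+X)^(j-1)) := by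
    rw [derivative_mul, derivative_mul, derivative_C, derivative_X_pow, derivative_pow]
    simp
  rw [hd]
  rcases k with _ | k <;> rcases j with _ | j <;>
    simp only [Nat.add_sub_cancel, pow_zero, pow_succ, map_mul, Polynomial.C_mul,
      Polynomial.C_add, C_eq_natCast, map_ofNat, C_1, C_0, Nat.cast_zero, Nat.cast_add,
      Nat.cast_mul, Nat.cast_one, Nat.cast_ofNat] <;>
    push_cast <;> ring

private lemma opB' (k j : ℕ) (c : ℝ) :
    (2*((2*k+1+j : ℕ) : ℝ[X])+1)*(2+3*X)*(C c * X^(k+1)*(1+X)^j)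
      - 2*X*(1+X)*derivative (C c * X^(k+1) * (1+X)^j)
    = C ((10*(k:ℝ)+4*(j:ℝ)+7)*c) * X^(k+1)*(1+X)^(j+1)
      - C ((4*(k:ℝ)+3)*c) * X^(k+1) * (1+X)^j := by
  have hd : derivative (C c * X^(k+1) * (1+X)^j)
      = C c * (C ((k:ℝ)+1) * X^k) * (1+X)^j + C c * X^(k+1) * (C (j:ℝ) * (1+X)^(j-1)) := by
    rw [derivative_mul, derivative_mul, derivative_C, derivative_X_pow, derivative_pow]
    simp
  rw [hd]
  rcases j with _ | j <;>
    simp only [Nat.add_sub_cancel, pow_zero, pow_succ, map_mul, Polynomial.C_mul,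
      Polynomial.C_add, C_eq_natCast, map_ofNat, C_1, C_0, Nat.cast_zero, Nat.cast_add,
      Nat.cast_mul, Nat.cast_one, Nat.cast_ofNat] <;>
    push_cast <;> ring

private lemma opA (m k : ℕ) (c : ℝ) (h : 2*k ≤ m) :
    (2*(m:ℝ[X])+1)*(2+3*X)*(C c * X^k*(1+X)^(m-2*k))
      - 2*X*(1+X)*derivative (C c * X^k * (1+X)^(m-2*k))
    = C (2*(2*(m:ℝ)+1-(k:ℝ))*c) * X^k*(1+X)^(m+1-2*k)
      + C ((4*(k:ℝ)+1)*c) * X^(k+1) * (1+X)^(m-2*k) := by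
  obtain ⟨j, rfl⟩ : ∃ j, m = 2*k + j := ⟨m - 2*k, by omega⟩
  have h1 : 2*k+j - 2*k = j := by omega
  have h2 : 2*k+j+1 - 2*k = j+1 := by omega
  rw [h1, h2,
    show (2*(2*((2*k+j:ℕ):ℝ)+1-(k:ℝ))*c) = 2*(3*(k:ℝ)+2*(j:ℝ)+1)*c by push_cast; ring]
  exact opA' k j c

private lemma opB (m k : ℕ) (c : ℝ) (h : 2*k+1 ≤ m) :
    (2*(m:ℝ[X])+1)*(2+3*X)*(C c * X^(k+1)*(1+X)^(m-1-2*k))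
      - 2*X*(1+X)*derivative (C c * X^(k+1) * (1+X)^(m-1-2*k))
    = C ((4*(m:ℝ)+2*(k:ℝ)+3)*c) * X^(k+1)*(1+X)^(m-2*k)
      - C ((4*(k:ℝ)+3)*c) * X^(k+1) * (1+X)^(m-1-2*k) := by
  obtain ⟨j, rfl⟩ : ∃ j, m = 2*k+1 + j := ⟨m - (2*k+1), by omega⟩
  have h1 : 2*k+1+j - 1 - 2*k = j := by omega
  have h2 : 2*k+1+j - 2*k = j+1 := by omega
  rw [h1, h2,
    show ((4*((2*k+1+j:ℕ):ℝ)+2*(k:ℝ)+3)*c) = (10*(k:ℝ)+4*(j:ℝ)+7)*c by push_cast; ring]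
  exact opB' k j c

private def Acoef (α β : ℕ → ℕ → ℝ) (m : ℕ) : ℕ → ℝ
  | 0 => 2*(2*(m:ℝ)+1)*α m 0
  | (k+1) => 2*(2*(m:ℝ)+1-((k:ℝ)+1))*α m (k+1) - (4*((k:ℝ)+1)-1)*β m k

private def Bcoef (α β : ℕ → ℕ → ℝ) (m k : ℕ) : ℝ :=
  (1+4*(k:ℝ))*α m k + (4*(m:ℝ)+2*(k:ℝ)+3)*β m k

theorem gamma_coefficients_recurrence (Q a b : ℕ → Polynomial ℝ) (α β : ℕ → ℕ → ℝ)
    (h0 : Q 0 = 1)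
    (hrec : ∀ m : ℕ, Q (m + 1) =
      (2 * (m : Polynomial ℝ) + 1) * (2 + 3 * Polynomial.X) * Q m
        - 2 * Polynomial.X * (1 + Polynomial.X) * Polynomial.derivative (Q m))
    (ha : ∀ m : ℕ, (1 - Polynomial.X) * a m = Q m - Polynomial.X * Polynomial.reflect m (Q m))
    (hb : ∀ m : ℕ, (Polynomial.X - 1) * b m = Q m - Polynomial.reflect m (Q m))
    (haexp : ∀ m : ℕ, a m = ∑ k ∈ Finset.range (m / 2 + 1),
      Polynomial.C (α m k) * Polynomial.X ^ k * (1 + Polynomial.X) ^ (m - 2 * k))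
    (hbexp : ∀ m : ℕ, b m = ∑ k ∈ Finset.range ((m - 1) / 2 + 1),
      Polynomial.C (β m k) * Polynomial.X ^ k * (1 + Polynomial.X) ^ (m - 1 - 2 * k))
    (hα0 : ∀ m k : ℕ, m / 2 < k → α m k = 0)
    (hβ0 : ∀ m k : ℕ, (m - 1) / 2 < k → β m k = 0) :
    ∀ m : ℕ, 1 ≤ m →
      (α (m + 1) 0 = 2 * (2 * (m : ℝ) + 1) * α m 0) ∧
      (∀ k : ℕ, α (m + 1) (k + 1) =
        2 * (2 * (m : ℝ) + 1 - ((k : ℝ) + 1)) * α m (k + 1)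
          - (4 * ((k : ℝ) + 1) - 1) * β m k) ∧
      (∀ k : ℕ, β (m + 1) k =
        (1 + 4 * (k : ℝ)) * α m k + (4 * (m : ℝ) + 2 * (k : ℝ) + 3) * β m k) := by
  have hone : (1 - X : ℝ[X]) ≠ 0 := fun h => by
    have := congrArg (eval 0) h; simp at this
  have hXone : (X - 1 : ℝ[X]) ≠ 0 := fun h => by
    have := congrArg (eval 0) h; simp at this
  have hQab : ∀ m : ℕ, Q m = a m + X * b m := by
    intro m
    have key : (1-X) * (a m + X * b m) = (1-X) * Q m := by
      calc (1-X)*(a m + X*b m) = (1-X)*a m - X*((X-1)*b m) := by ring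
        _ = (Q m - X * reflect m (Q m)) - X*(Q m - reflect m (Q m)) := by rw [ha m, hb m]
        _ = (1-X)*Q m := by ring
    exact (mul_left_cancel₀ hone key).symm
  intro m hm
  -- Step 1: expand Q (m+1)
  have hQ1 : Q (m+1) =
      (∑ k ∈ range (m/2+1),
        (C (2*(2*(m:ℝ)+1-(k:ℝ))*α m k) * X^k*(1+X)^(m+1-2*k)
          + C ((4*(k:ℝ)+1)*α m k) * X^(k+1) * (1+X)^(m-2*k)))
      + (∑ k ∈ range ((m-1)/2+1),
        (C ((4*(m:ℝ)+2*(k:ℝ)+3)*β m k) * X^(k+1)*(1+X)^(m-2*k)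
          - C ((4*(k:ℝ)+3)*β m k) * X^(k+1) * (1+X)^(m-1-2*k))) := by
    have key : ∀ (s t : Finset ℕ) (f g F G : ℕ → ℝ[X]),
        (∀ k ∈ s, (2*(m:ℝ[X])+1)*(2+3*X) * f k - 2*X*(1+X) * derivative (f k) = F k) →
        (∀ k ∈ t, (2*(m:ℝ[X])+1)*(2+3*X) * g k - 2*X*(1+X) * derivative (g k) = G k) →
        (2*(m:ℝ[X])+1)*(2+3*X) * ((∑ k ∈ s, f k) + (∑ k ∈ t, g k))
          - 2*X*(1+X) * derivative ((∑ k ∈ s, f k) + (∑ k ∈ t, g k))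
        = (∑ k ∈ s, F k) + (∑ k ∈ t, G k) := by
      intro s t f g F G hF hG
      have h1 : (∑ k ∈ s, F k)
          = (2*(m:ℝ[X])+1)*(2+3*X) * (∑ k ∈ s, f k) - 2*X*(1+X) * derivative (∑ k ∈ s, f k) := by
        rw [derivative_sum, Finset.mul_sum, Finset.mul_sum, ← sum_sub_distrib]
        exact (Finset.sum_congr rfl hF).symm
      have h2 : (∑ k ∈ t, G k)
          = (2*(m:ℝ[X])+1)*(2+3*X) * (∑ k ∈ t, g k) - 2*X*(1+X) * derivative (∑ k ∈ t, g k) := by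
        rw [derivative_sum, Finset.mul_sum, Finset.mul_sum, ← sum_sub_distrib]
        exact (Finset.sum_congr rfl hG).symm
      rw [h1, h2, derivative_add]
      ring
    rw [hrec m, hQab m, haexp m, hbexp m, Finset.mul_sum]
    refine key _ _ _ _ _ _ (fun k hk => ?_) (fun k hk => ?_)
    · exact opA m k (α m k) (by have := mem_range.mp hk; omega)
    · have hX : X * (C (β m k) * X^k * (1+X)^(m-1-2*k))
          = C (β m k) * X^(k+1) * (1+X)^(m-1-2*k) := by
        rw [pow_succ]; ring
      rw [hX]
      exact opB m k (β m k) (by have := mem_range.mp hk; omega)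
  -- Step 2: regroup as Pa + X * Pb
  have hPa : (∑ k ∈ range (m/2+1), C (2*(2*(m:ℝ)+1-(k:ℝ))*α m k) * X^k*(1+X)^(m+1-2*k))
      - (∑ k ∈ range ((m-1)/2+1), C ((4*(k:ℝ)+3)*β m k) * X^(k+1) * (1+X)^(m-1-2*k))
      = ∑ k ∈ range ((m+1)/2+1), C (Acoef α β m k) * X^k * (1+X)^(m+1-2*k) := by
    have hext : (∑ k ∈ range (m/2+1), C (2*(2*(m:ℝ)+1-(k:ℝ))*α m k) * X^k*(1+X)^(m+1-2*k))
        = ∑ k ∈ range ((m-1)/2+2), C (2*(2*(m:ℝ)+1-(k:ℝ))*α m k) * X^k*(1+X)^(m+1-2*k) := by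
      refine Finset.sum_subset (by rw [range_subset_range]; omega) (fun x _ hx => ?_)
      rw [mem_range, not_lt] at hx
      rw [hα0 m x (by omega), mul_zero, map_zero, zero_mul, zero_mul]
    have hrange : (m+1)/2+1 = (m-1)/2+2 := by omega
    rw [hext, hrange,
      sum_range_succ' (fun k => C (Acoef α β m k) * X^k * (1+X)^(m+1-2*k)) ((m-1)/2+1),
      sum_range_succ' (fun k => C (2*(2*(m:ℝ)+1-(k:ℝ))*α m k) * X^k*(1+X)^(m+1-2*k)) ((m-1)/2+1)]
    have hterm : (∑ k ∈ range ((m-1)/2+1),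
          C (2*(2*(m:ℝ)+1-((k+1:ℕ):ℝ))*α m (k+1)) * X^(k+1)*(1+X)^(m+1-2*(k+1)))
        - (∑ k ∈ range ((m-1)/2+1), C ((4*(k:ℝ)+3)*β m k) * X^(k+1) * (1+X)^(m-1-2*k))
        = ∑ k ∈ range ((m-1)/2+1), C (Acoef α β m (k+1)) * X^(k+1) * (1+X)^(m+1-2*(k+1)) := by
      rw [← sum_sub_distrib]
      refine Finset.sum_congr rfl (fun k hk => ?_)
      have he : m+1-2*(k+1) = m-1-2*k := by omega
      have hc1 : (2*(2*(m:ℝ)+1-((k+1:ℕ):ℝ))*α m (k+1))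
          = 2*(2*(m:ℝ)+1-((k:ℝ)+1))*α m (k+1) := by push_cast; ring
      have hc2 : ((4*(k:ℝ)+3)*β m k) = (4*((k:ℝ)+1)-1)*β m k := by ring
      rw [Acoef, he, hc1, hc2, C_sub, sub_mul, sub_mul]
      ring
    have h00 : C (2*(2*(m:ℝ)+1-((0:ℕ):ℝ))*α m 0) * X^0 * (1+X)^(m+1-2*0)
        = C (Acoef α β m 0) * X^0 * (1+X)^(m+1-2*0) := by
      rw [Acoef]
      norm_num
    rw [← hterm, ← h00]
    ring
  have hPb : (∑ k ∈ range (m/2+1), C ((4*(k:ℝ)+1)*α m k) * X^k * (1+X)^(m-2*k))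
      + (∑ k ∈ range ((m-1)/2+1), C ((4*(m:ℝ)+2*(k:ℝ)+3)*β m k) * X^k*(1+X)^(m-2*k))
      = ∑ k ∈ range (m/2+1), C (Bcoef α β m k) * X^k * (1+X)^(m-2*k) := by
    have hext : (∑ k ∈ range ((m-1)/2+1), C ((4*(m:ℝ)+2*(k:ℝ)+3)*β m k) * X^k*(1+X)^(m-2*k))
        = ∑ k ∈ range (m/2+1), C ((4*(m:ℝ)+2*(k:ℝ)+3)*β m k) * X^k*(1+X)^(m-2*k) := by
      refine Finset.sum_subset (by rw [range_subset_range]; omega) (fun x _ hx => ?_)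
      rw [mem_range, not_lt] at hx
      rw [hβ0 m x (by omega), mul_zero, map_zero, zero_mul, zero_mul]
    rw [hext, ← sum_add_distrib]
    refine Finset.sum_congr rfl (fun k hk => ?_)
    rw [Bcoef, C_add, add_mul, add_mul]
    congr 3
    ring
  have hQ2 : Q (m+1) = (∑ k ∈ range ((m+1)/2+1), C (Acoef α β m k) * X^k * (1+X)^(m+1-2*k))
      + X * (∑ k ∈ range (m/2+1), C (Bcoef α β m k) * X^k * (1+X)^(m-2*k)) := by
    rw [← hPa, ← hPb, hQ1]
    rw [sum_add_distrib, sum_sub_distrib]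
    have h2 : X * ((∑ k ∈ range (m/2+1), C ((4*(k:ℝ)+1)*α m k) * X^k * (1+X)^(m-2*k))
        + (∑ k ∈ range ((m-1)/2+1), C ((4*(m:ℝ)+2*(k:ℝ)+3)*β m k) * X^k*(1+X)^(m-2*k)))
        = (∑ k ∈ range (m/2+1), C ((4*(k:ℝ)+1)*α m k) * X^(k+1) * (1+X)^(m-2*k))
        + (∑ k ∈ range ((m-1)/2+1), C ((4*(m:ℝ)+2*(k:ℝ)+3)*β m k) * X^(k+1)*(1+X)^(m-2*k)) := by
      rw [mul_add, Finset.mul_sum, Finset.mul_sum]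
      refine congrArg₂ (· + ·) (Finset.sum_congr rfl fun k _ => by rw [pow_succ]; ring)
        (Finset.sum_congr rfl fun k _ => by rw [pow_succ]; ring)
    rw [h2]
    ring
  -- Step 3: symmetry and degree
  have hPbdeg : (∑ k ∈ range (m/2+1), C (Bcoef α β m k) * X^k * (1+X)^(m-2*k)).natDegree ≤ m := by
    refine natDegree_sum_le_of_forall_le _ _ (fun k hk => ?_)
    refine le_trans (basis_deg _ _ _) ?_
    have := mem_range.mp hk
    omega
  have hPasym : reflect (m+1) (∑ k ∈ range ((m+1)/2+1), C (Acoef α β m k) * X^k * (1+X)^(m+1-2*k))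
      = ∑ k ∈ range ((m+1)/2+1), C (Acoef α β m k) * X^k * (1+X)^(m+1-2*k) := by
    rw [reflect_sum]
    refine Finset.sum_congr rfl (fun k hk => ?_)
    exact reflect_basis _ _ _ (by have := mem_range.mp hk; omega)
  have hPbsym : reflect m (∑ k ∈ range (m/2+1), C (Bcoef α β m k) * X^k * (1+X)^(m-2*k))
      = ∑ k ∈ range (m/2+1), C (Bcoef α β m k) * X^k * (1+X)^(m-2*k) := by
    rw [reflect_sum]
    refine Finset.sum_congr rfl (fun k hk => ?_)
    exact reflect_basis _ _ _ (by have := mem_range.mp hk; omega)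
  have hQr : reflect (m+1) (Q (m+1))
      = (∑ k ∈ range ((m+1)/2+1), C (Acoef α β m k) * X^k * (1+X)^(m+1-2*k))
      + (∑ k ∈ range (m/2+1), C (Bcoef α β m k) * X^k * (1+X)^(m-2*k)) := by
    rw [hQ2, reflect_add, hPasym]
    congr 1
    have hmul : reflect (1+m) (X * (∑ k ∈ range (m/2+1), C (Bcoef α β m k) * X^k * (1+X)^(m-2*k)))
        = reflect 1 X * reflect m (∑ k ∈ range (m/2+1), C (Bcoef α β m k) * X^k * (1+X)^(m-2*k)) :=
      reflect_mul _ _ natDegree_X_le hPbdeg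
    rw [show m+1 = 1+m by omega, hmul, hPbsym]
    have : reflect 1 (X:ℝ[X]) = 1 := by
      rw [show (X:ℝ[X]) = X^1 by ring, reflect_monomial]
      simp [revAt_le]
    rw [this, one_mul]
  -- Step 4: identify a (m+1) and b (m+1)
  have ha1 : a (m+1) = ∑ k ∈ range ((m+1)/2+1), C (Acoef α β m k) * X^k * (1+X)^(m+1-2*k) := by
    refine mul_left_cancel₀ hone ?_
    rw [ha (m+1), hQr, hQ2]
    ring
  have hb1 : b (m+1) = ∑ k ∈ range (m/2+1), C (Bcoef α β m k) * X^k * (1+X)^(m-2*k) := by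
    refine mul_left_cancel₀ hXone ?_
    rw [hb (m+1), hQr, hQ2]
    ring
  -- Step 5: extract coefficients
  have hαeq : ∀ k, k < (m+1)/2+1 → α (m+1) k = Acoef α β m k := by
    have hz : (∑ k ∈ range ((m+1)/2+1),
        C (α (m+1) k - Acoef α β m k) * X^k * (1+X)^((m+1)-2*k)) = 0 := by
      simp only [C_sub, sub_mul]
      rw [sum_sub_distrib, ← haexp (m+1), ← ha1, sub_self]
    intro k hk
    have h : α (m+1) k - Acoef α β m k = 0 :=
      indep ((m+1)/2+1) (m+1) (fun k => α (m+1) k - Acoef α β m k)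
        (fun k hk => by omega) hz k hk
    linarith [h]
  have hβeq : ∀ k, k < m/2+1 → β (m+1) k = Bcoef α β m k := by
    have hbe := hbexp (m+1)
    have hs : (m+1) - 1 = m := by omega
    rw [hs] at hbe
    have hz : (∑ k ∈ range (m/2+1),
        C (β (m+1) k - Bcoef α β m k) * X^k * (1+X)^(m-2*k)) = 0 := by
      simp only [C_sub, sub_mul]
      rw [sum_sub_distrib, ← hbe, ← hb1, sub_self]
    intro k hk
    have h : β (m+1) k - Bcoef α β m k = 0 :=
      indep (m/2+1) m (fun k => β (m+1) k - Bcoef α β m k)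
        (fun k hk => by omega) hz k hk
    linarith [h]
  refine ⟨?_, ?_, ?_⟩
  · have := hαeq 0 (by omega)
    rw [this, Acoef]
  · intro k
    by_cases hk : k+1 < (m+1)/2+1
    · rw [hαeq (k+1) hk, Acoef]
    · rw [hα0 (m+1) (k+1) (by omega), hα0 m (k+1) (by omega), hβ0 m k (by omega)]
      ring
  · intro k
    by_cases hk : k < m/2+1
    · rw [hβeq k hk, Bcoef]
    · rw [hβ0 (m+1) k (by omega), hα0 m k (by omega), hβ0 m k (by omega)]
      ring
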